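/- Let F be a finitely generated free group, let m ≥ 1, set Q = F/γ_{m+1}(F), and let Z = γ_m(Q) = γ_m(F)/γ_{m+1}(F), which is a central subgroup of Q. Let H = F/γ_1(F) be the abelianization of F (note the abelianization of Q is also H, since m ≥ 1). For every group homomorphism d : H → Z, the map θ_d : Q → Q defined by θ_d(x) = x · d([x]), where [x] ∈ H is the image of x, is an automorphism of Q that induces the identity automorphism on F/γ_m(F); moreover d ↦ θ_d is an injective group homomorphism from the additive group Hom(H, Z) into Aut(Q). -/

import Mathlib

private lemma lcs_map_eq {G G' : Type*} [Group G] [Group G'] (f : G →* G')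
    (hf : Function.Surjective f) (n : ℕ) :
    Subgroup.map f ((⊤ : Subgroup G).lowerCentralSeries n) = (⊤ : Subgroup G').lowerCentralSeries n := by
  induction n with
  | zero =>
    simpa [Subgroup.lowerCentralSeries_zero] using Subgroup.map_top_of_surjective f hf
  | succ n ih =>
    have h1 : (⊤ : Subgroup G).lowerCentralSeries (n + 1) = ⁅(⊤ : Subgroup G).lowerCentralSeries n, (⊤ : Subgroup G)⁆ := rfl
    have h2 : (⊤ : Subgroup G').lowerCentralSeries (n + 1) = ⁅(⊤ : Subgroup G').lowerCentralSeries n, (⊤ : Subgroup G')⁆ := rfl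
    rw [h1, h2, Subgroup.map_commutator, ih, Subgroup.map_top_of_surjective f hf]

private lemma lcs_quot_self_eq_bot {G : Type*} [Group G] (n : ℕ) :
    (⊤ : Subgroup (G ⧸ (⊤ : Subgroup G).lowerCentralSeries n)).lowerCentralSeries n = ⊥ := by
  rw [← lcs_map_eq (QuotientGroup.mk' ((⊤ : Subgroup G).lowerCentralSeries n))
    (QuotientGroup.mk'_surjective _) n]
  rw [Subgroup.map_eq_bot_iff, QuotientGroup.ker_mk']

theorem statement6 {α : Type*} [Finite α] (m : ℕ) (hm : 1 ≤ m)
    (pr : (FreeGroup α ⧸ (⊤ : Subgroup (FreeGroup α)).lowerCentralSeries (m + 1)) →*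
          (FreeGroup α ⧸ (⊤ : Subgroup (FreeGroup α)).lowerCentralSeries 1))
    (hpr : ∀ x : FreeGroup α, pr (QuotientGroup.mk x) = QuotientGroup.mk x)
    (π : (FreeGroup α ⧸ (⊤ : Subgroup (FreeGroup α)).lowerCentralSeries (m + 1)) →*
         (FreeGroup α ⧸ (⊤ : Subgroup (FreeGroup α)).lowerCentralSeries m))
    (hπ : ∀ x : FreeGroup α, π (QuotientGroup.mk x) = QuotientGroup.mk x) :
    -- Z = γ_m(Q) is central in Q ...
    ((⊤ : Subgroup (FreeGroup α ⧸ (⊤ : Subgroup (FreeGroup α)).lowerCentralSeries (m + 1))).lowerCentralSeries m ≤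
        Subgroup.center (FreeGroup α ⧸ (⊤ : Subgroup (FreeGroup α)).lowerCentralSeries (m + 1))) ∧
    -- ... and equals γ_m(F)/γ_{m+1}(F), the image of γ_m(F) in Q
    ((⊤ : Subgroup (FreeGroup α ⧸ (⊤ : Subgroup (FreeGroup α)).lowerCentralSeries (m + 1))).lowerCentralSeries m =
        Subgroup.map (QuotientGroup.mk' ((⊤ : Subgroup (FreeGroup α)).lowerCentralSeries (m + 1)))
          ((⊤ : Subgroup (FreeGroup α)).lowerCentralSeries m)) ∧
    -- for every d : H → Z, θ_d : x ↦ x * d (pr x) is an automorphism of Q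
    -- inducing the identity on F ⧸ γ_m(F) ...
    (∀ d : (FreeGroup α ⧸ (⊤ : Subgroup (FreeGroup α)).lowerCentralSeries 1) →*
           (FreeGroup α ⧸ (⊤ : Subgroup (FreeGroup α)).lowerCentralSeries (m + 1)),
      (∀ h, d h ∈
          (⊤ : Subgroup (FreeGroup α ⧸ (⊤ : Subgroup (FreeGroup α)).lowerCentralSeries (m + 1))).lowerCentralSeries m) →
      (Function.Bijective fun x => x * d (pr x)) ∧
      (∀ x y, (x * y) * d (pr (x * y)) = (x * d (pr x)) * (y * d (pr y))) ∧
      (∀ x, π (x * d (pr x)) = π x)) ∧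
    -- ... and d ↦ θ_d is a group homomorphism: θ_d ∘ θ_{d'} = θ_{d·d'} ...
    (∀ d d' : (FreeGroup α ⧸ (⊤ : Subgroup (FreeGroup α)).lowerCentralSeries 1) →*
           (FreeGroup α ⧸ (⊤ : Subgroup (FreeGroup α)).lowerCentralSeries (m + 1)),
      (∀ h, d h ∈
          (⊤ : Subgroup (FreeGroup α ⧸ (⊤ : Subgroup (FreeGroup α)).lowerCentralSeries (m + 1))).lowerCentralSeries m) →
      (∀ h, d' h ∈
          (⊤ : Subgroup (FreeGroup α ⧸ (⊤ : Subgroup (FreeGroup α)).lowerCentralSeries (m + 1))).lowerCentralSeries m) →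
      ∀ x, (x * d' (pr x)) * d (pr (x * d' (pr x))) = x * (d (pr x) * d' (pr x))) ∧
    -- ... which is injective.
    (∀ d : (FreeGroup α ⧸ (⊤ : Subgroup (FreeGroup α)).lowerCentralSeries 1) →*
           (FreeGroup α ⧸ (⊤ : Subgroup (FreeGroup α)).lowerCentralSeries (m + 1)),
      (∀ h, d h ∈
          (⊤ : Subgroup (FreeGroup α ⧸ (⊤ : Subgroup (FreeGroup α)).lowerCentralSeries (m + 1))).lowerCentralSeries m) →
      (∀ x, x * d (pr x) = x) → ∀ h, d h = 1) := by
  set F := FreeGroup α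
  set Q := F ⧸ (⊤ : Subgroup F).lowerCentralSeries (m + 1) with hQ
  -- γ_{m+1}(Q) = ⊥
  have hbot : (⊤ : Subgroup Q).lowerCentralSeries (m + 1) = ⊥ := lcs_quot_self_eq_bot (m + 1)
  -- centrality
  have hcen : (⊤ : Subgroup Q).lowerCentralSeries m ≤ Subgroup.center Q := by
    intro z hz
    rw [Subgroup.mem_center_iff]
    intro g
    letI : Bracket Q Q := commutatorElement
    have : ⁅z, g⁆ ∈ (⊤ : Subgroup Q).lowerCentralSeries (m + 1) := by
      have h1 : (⊤ : Subgroup Q).lowerCentralSeries (m + 1) = ⁅(⊤ : Subgroup Q).lowerCentralSeries m, (⊤ : Subgroup Q)⁆ := rfl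
      rw [h1]
      exact Subgroup.commutator_mem_commutator hz (Subgroup.mem_top g)
    rw [hbot, Subgroup.mem_bot, commutatorElement_eq_one_iff_mul_comm] at this
    exact this.symm
  -- commuting with central elements
  have hcomm : ∀ z : Q, z ∈ (⊤ : Subgroup Q).lowerCentralSeries m → ∀ g : Q, g * z = z * g := by
    intro z hz g
    exact (Subgroup.mem_center_iff.mp (hcen hz) g)
  -- pr kills γ_m(Q)
  have hprZ : ∀ z : Q, z ∈ (⊤ : Subgroup Q).lowerCentralSeries m → pr z = 1 := by
    intro z hz
    have h1 : pr z ∈ (⊤ : Subgroup (F ⧸ (⊤ : Subgroup F).lowerCentralSeries 1)).lowerCentralSeries m :=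
      Subgroup.lowerCentralSeries.map pr m ⟨z, hz, rfl⟩
    have h2 : (⊤ : Subgroup (F ⧸ (⊤ : Subgroup F).lowerCentralSeries 1)).lowerCentralSeries m ≤
        (⊤ : Subgroup (F ⧸ (⊤ : Subgroup F).lowerCentralSeries 1)).lowerCentralSeries 1 := Subgroup.lowerCentralSeries_antitone _ hm
    have h3 : (⊤ : Subgroup (F ⧸ (⊤ : Subgroup F).lowerCentralSeries 1)).lowerCentralSeries 1 = ⊥ := lcs_quot_self_eq_bot 1
    have := h2 h1
    rw [h3, Subgroup.mem_bot] at this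
    exact this
  -- π kills γ_m(Q)
  have hπZ : ∀ z : Q, z ∈ (⊤ : Subgroup Q).lowerCentralSeries m → π z = 1 := by
    intro z hz
    have h1 : π z ∈ (⊤ : Subgroup (F ⧸ (⊤ : Subgroup F).lowerCentralSeries m)).lowerCentralSeries m :=
      Subgroup.lowerCentralSeries.map π m ⟨z, hz, rfl⟩
    rw [lcs_quot_self_eq_bot m, Subgroup.mem_bot] at h1
    exact h1
  -- pr is surjective
  have hprsurj : Function.Surjective pr := by
    intro h
    obtain ⟨x, rfl⟩ := QuotientGroup.mk_surjective h
    exact ⟨QuotientGroup.mk x, hpr x⟩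
  refine ⟨hcen, ?_, ?_, ?_, ?_⟩
  · -- γ_m(Q) = image of γ_m(F)
    exact (lcs_map_eq (QuotientGroup.mk' ((⊤ : Subgroup F).lowerCentralSeries (m + 1)))
      (QuotientGroup.mk'_surjective _) m).symm
  · -- θ_d automorphism
    intro d hd
    have hprd : ∀ h, pr (d h) = 1 := fun h => hprZ _ (hd h)
    refine ⟨?_, ?_, ?_⟩
    · rw [Function.bijective_iff_has_inverse]
      refine ⟨fun x => x * (d (pr x))⁻¹, ?_, ?_⟩
      · intro x
        simp only [map_mul, map_inv, hprd, inv_one, mul_one, mul_inv_cancel_right]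
      · intro x
        simp only [map_mul, map_inv, hprd, mul_one, map_one, inv_one,
          inv_mul_cancel_right, mul_inv_cancel_right]
    · intro x y
      have : d (pr (x * y)) = d (pr x) * d (pr y) := by rw [map_mul, map_mul]
      rw [this, ← mul_assoc, ← mul_assoc, mul_assoc x y (d (pr x)),
        hcomm _ (hd _) y, ← mul_assoc]
    · intro x
      rw [map_mul, hπZ _ (hd _), mul_one]
  · -- composition law
    intro d d' hd hd' x
    rw [map_mul, map_mul, hprZ _ (hd' _), map_one, mul_one, mul_assoc,
      hcomm _ (hd _) (d' (pr x)), ← mul_assoc, mul_assoc]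
  · -- injectivity
    intro d hd hfix h
    obtain ⟨x, rfl⟩ := hprsurj h
    have h0 : x * d (pr x) = x * 1 := by rw [mul_one]; exact hfix x
    exact mul_left_cancel h0
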